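/- With notation as in the previous statement, for any r ≥ 1 and T > 0 there exists C < ∞ (depending only on r, T, ‖h‖_∞, d_y) such that E[(E[Z_T | Y_T-σ-algebra])^{-r}] ≤ C, where the conditional expectation is taken with respect to the σ-algebra generated by {Y_s, 0 ≤ s ≤ T}. -/

import Mathlib

open MeasureTheory Filter

lemma tangent_line (r : ℝ) (hr : 0 ≤ r) {x t : ℝ} (hx : 0 < x) (ht : 0 < t) :
    (1 + r) * t ^ (-r) - r * t ^ (-r - 1) * x ≤ x ^ (-r) := by
  have hu : (0:ℝ) < x / t := div_pos hx ht
  have hlog : Real.log (x / t) ≤ x / t - 1 := Real.log_le_sub_one_of_pos hu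
  have h1 : 1 - r * (x / t - 1) ≤ (x / t) ^ (-r) := by
    have he : (-(r * Real.log (x / t))) + 1 ≤ Real.exp (-(r * Real.log (x / t))) :=
      Real.add_one_le_exp _
    have hrl : r * Real.log (x / t) ≤ r * (x / t - 1) := mul_le_mul_of_nonneg_left hlog hr
    have : (x / t) ^ (-r) = Real.exp (-(r * Real.log (x / t))) := by
      rw [Real.rpow_def_of_pos hu]; ring_nf
    rw [this]; linarith
  have hA : (0:ℝ) < t ^ (-r) := Real.rpow_pos_of_pos ht _
  have hxt : x ^ (-r) = t ^ (-r) * (x / t) ^ (-r) := by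
    rw [← Real.mul_rpow ht.le hu.le, mul_comm t, div_mul_cancel₀ x ht.ne']
  have h2 : t ^ (-r - 1) = t ^ (-r) / t := by
    rw [Real.rpow_sub ht, Real.rpow_one]
  calc (1 + r) * t ^ (-r) - r * t ^ (-r - 1) * x
      = t ^ (-r) * (1 - r * (x / t - 1)) := by rw [h2]; field_simp; ring
    _ ≤ t ^ (-r) * (x / t) ^ (-r) := mul_le_mul_of_nonneg_left h1 hA.le
    _ = x ^ (-r) := hxt.symm

/-- Negative moment bound for the conditional expectation of the Girsanov weight:
with `Z_T` as in the previous statement and `𝒢 = σ({Y_s}_{0≤s≤T})`, for any `r ≥ 1`, `T > 0`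
there is `C < ∞` (depending only on `r, T, ‖h‖_∞, d_y`) with
`E[(E[Z_T | 𝒢])^{-r}] ≤ C`. -/
theorem stmt3 (dx dy : ℕ) (T Ch r : ℝ) (hT : 0 < T) (hCh : 0 ≤ Ch) (hr : 1 ≤ r) :
    ∃ C : ℝ, ∀ (Ω : Type) [mΩ : MeasurableSpace Ω] (P : Measure Ω)
      [IsProbabilityMeasure P]
      (h : EuclideanSpace ℝ (Fin dx) → EuclideanSpace ℝ (Fin dy)),
      (∀ x, ‖h x‖ ≤ Ch) → Measurable h →
      ∀ (X : ℝ → Ω → EuclideanSpace ℝ (Fin dx)), Measurable (Function.uncurry X) →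
      ∀ (S V Z : Ω → ℝ), Measurable S →
        (∀ ω, V ω = ∫ s in Set.Ioc (0:ℝ) T, ‖h (X s ω)‖ ^ 2) →
        (∀ c : ℝ, ∫ ω, Real.exp (c * S ω - c ^ 2 / 2 * V ω) ∂P = 1) →
        (∀ ω, Z ω = Real.exp (S ω - V ω / 2)) →
      ∀ (𝒢 : MeasurableSpace Ω), 𝒢 ≤ mΩ →
        ∫ ω, ((P[Z|𝒢]) ω) ^ (-r) ∂P ≤ C := by
  refine ⟨Real.exp ((r ^ 2 + r) / 2 * (Ch ^ 2 * T)), ?_⟩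
  intro Ω mΩ P _ h hhb hhm X hX S V Z hS hV hmgf hZ
  set C : ℝ := Real.exp ((r ^ 2 + r) / 2 * (Ch ^ 2 * T)) with hC
  -- measurability of V
  have hFmeas : Measurable (fun p : Ω × ℝ => ‖h (X p.2 p.1)‖ ^ 2) := by
    have hXm : Measurable fun p : Ω × ℝ => X p.2 p.1 := by
      have h1 : Measurable fun p : Ω × ℝ => ((p.2, p.1) : ℝ × Ω) :=
        Measurable.prodMk measurable_snd measurable_fst
      exact hX.comp h1
    exact ((hhm.comp hXm).norm).pow_const 2
  have hVmeas : Measurable V := by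
    have := (hFmeas.stronglyMeasurable.integral_prod_right'
      (ν := volume.restrict (Set.Ioc (0:ℝ) T))).measurable
    have hVeq : V = fun ω => ∫ s in Set.Ioc (0:ℝ) T, ‖h (X s ω)‖ ^ 2 := funext hV
    rw [hVeq]; exact this
  -- bounds on V
  have hV0 : ∀ ω, 0 ≤ V ω := by
    intro ω; rw [hV]
    exact integral_nonneg fun s => by positivity
  have hVle : ∀ ω, V ω ≤ Ch ^ 2 * T := by
    intro ω; rw [hV]
    have hXsec : Measurable fun s : ℝ => X s ω := by
      have h1 : Measurable fun s : ℝ => ((s, ω) : ℝ × Ω) :=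
        Measurable.prodMk measurable_id measurable_const
      exact hX.comp h1
    have hsmeas : Measurable fun s : ℝ => ‖h (X s ω)‖ ^ 2 :=
      ((hhm.comp hXsec).norm).pow_const 2
    have hbd : ∀ s : ℝ, ‖h (X s ω)‖ ^ 2 ≤ Ch ^ 2 := fun s =>
      pow_le_pow_left₀ (norm_nonneg _) (hhb _) 2
    have hconst : IntegrableOn (fun _ : ℝ => Ch ^ 2) (Set.Ioc (0:ℝ) T) volume := by
      refine integrableOn_const (ne_of_lt ?_) (by simp)
      exact measure_Ioc_lt_top
    have hint : IntegrableOn (fun s : ℝ => ‖h (X s ω)‖ ^ 2) (Set.Ioc (0:ℝ) T) volume := by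
      refine hconst.mono' hsmeas.aestronglyMeasurable ?_
      exact Filter.Eventually.of_forall fun s => by
        rw [Real.norm_eq_abs, abs_of_nonneg (by positivity)]; exact hbd s
    calc ∫ s in Set.Ioc (0:ℝ) T, ‖h (X s ω)‖ ^ 2
        ≤ ∫ s in Set.Ioc (0:ℝ) T, Ch ^ 2 :=
          setIntegral_mono_on hint hconst measurableSet_Ioc fun s _ => hbd s
      _ = Ch ^ 2 * T := by
          rw [setIntegral_const, smul_eq_mul, measureReal_def, Real.volume_Ioc,
            ENNReal.toReal_ofReal (by linarith)]
          ring
  -- Z and W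
  have hr0 : (0:ℝ) ≤ r := by linarith
  have hZeq : Z = fun ω => Real.exp (1 * S ω - 1 ^ 2 / 2 * V ω) := by
    funext ω; rw [hZ]; ring_nf
  have hZint : Integrable Z P := by
    by_contra hcon
    have := integral_undef hcon
    rw [hZeq] at this
    rw [hmgf 1] at this
    norm_num at this
  have hZpos : ∀ ω, 0 < Z ω := fun ω => by rw [hZ]; exact Real.exp_pos _
  set W : Ω → ℝ := fun ω => Real.exp ((-r) * S ω - (-r) ^ 2 / 2 * V ω) with hW
  have hWint_eq : ∫ ω, W ω ∂P = 1 := hmgf (-r)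
  have hWint : Integrable W P := by
    by_contra hcon
    have := integral_undef hcon
    rw [hWint_eq] at this; norm_num at this
  have hW0 : ∀ ω, 0 ≤ W ω := fun ω => (Real.exp_pos _).le
  -- Z^{-r} = W * exp(((r²+r)/2) V) ≤ C * W
  have hZr_eq : ∀ ω, Z ω ^ (-r) = W ω * Real.exp ((r ^ 2 + r) / 2 * V ω) := by
    intro ω
    rw [hZ, ← Real.exp_log (Real.exp_pos (S ω - V ω / 2)), Real.log_exp,
      ← Real.exp_mul, hW, ← Real.exp_add, Real.exp_eq_exp]
    ring
  have hZr_le : ∀ ω, Z ω ^ (-r) ≤ C * W ω := by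
    intro ω
    rw [hZr_eq ω, mul_comm (W ω)]
    refine mul_le_mul_of_nonneg_right ?_ (hW0 ω)
    rw [hC]
    exact Real.exp_le_exp.2 (mul_le_mul_of_nonneg_left (hVle ω) (by positivity))
  have hZr_nonneg : ∀ ω, 0 ≤ Z ω ^ (-r) := fun ω => Real.rpow_nonneg (hZpos ω).le _
  have hZmeas : Measurable Z := by
    rw [hZeq]; exact ((hS.const_mul 1).sub (hVmeas.const_mul _)).exp
  have hZr_meas : Measurable fun ω => Z ω ^ (-r) :=
    hZmeas.pow measurable_const
  have hZr_int : Integrable (fun ω => Z ω ^ (-r)) P := by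
    refine (hWint.const_mul C).mono' hZr_meas.aestronglyMeasurable ?_
    exact Filter.Eventually.of_forall fun ω => by
      rw [Real.norm_eq_abs, abs_of_nonneg (hZr_nonneg ω)]; exact hZr_le ω
  have hZr_intle : ∫ ω, Z ω ^ (-r) ∂P ≤ C := by
    calc ∫ ω, Z ω ^ (-r) ∂P ≤ ∫ ω, C * W ω ∂P :=
          integral_mono hZr_int (hWint.const_mul C) hZr_le
      _ = C * ∫ ω, W ω ∂P := integral_const_mul _ _
      _ = C := by rw [hWint_eq, mul_one]
  -- conditional expectations
  intro 𝒢 h𝒢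
  set g : Ω → ℝ := P[Z|𝒢] with hg
  set h2 : Ω → ℝ := P[fun ω => Z ω ^ (-r)|𝒢] with hh2
  have hg0 : 0 ≤ᵐ[P] g := condExp_nonneg (Filter.Eventually.of_forall fun ω => (hZpos ω).le)
  have hh20 : 0 ≤ᵐ[P] h2 := condExp_nonneg (Filter.Eventually.of_forall hZr_nonneg)
  -- tangent line inequality under condexp, for each rational t
  have hkey : ∀ q : ℚ, 0 < (q:ℝ) →
      (fun ω => (1 + r) * (q:ℝ) ^ (-r) - r * (q:ℝ) ^ (-r - 1) * g ω) ≤ᵐ[P] h2 := by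
    intro q hq
    set aq : ℝ := (1 + r) * (q:ℝ) ^ (-r)
    set bq : ℝ := r * (q:ℝ) ^ (-r - 1)
    have hfq_int : Integrable ((fun _ : Ω => aq) - bq • Z) P :=
      (integrable_const aq).sub (hZint.smul bq)
    have hptwise : ((fun _ : Ω => aq) - bq • Z) ≤ᵐ[P] fun ω => Z ω ^ (-r) := by
      refine Filter.Eventually.of_forall fun ω => ?_
      simpa [aq, bq, Pi.sub_apply, Pi.smul_apply, smul_eq_mul, mul_assoc] using
        tangent_line r hr0 (hZpos ω) hq
    have e1 : P[(fun _ : Ω => aq) - bq • Z|𝒢] ≤ᵐ[P] h2 := condExp_mono hfq_int hZr_int hptwise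
    have e2 : P[(fun _ : Ω => aq) - bq • Z|𝒢] =ᵐ[P] (fun _ : Ω => aq) - bq • g := by
      refine (condExp_sub (integrable_const aq) (hZint.smul bq) 𝒢).trans ?_
      refine Filter.EventuallyEq.sub ?_ (condExp_smul bq Z 𝒢)
      rw [condExp_const h𝒢]
    filter_upwards [e1, e2] with ω he1 he2
    have : aq - bq * g ω = ((fun _ : Ω => aq) - bq • g) ω := by
      simp [Pi.sub_apply, Pi.smul_apply, smul_eq_mul]
    rw [this, ← he2]
    exact he1
  have hkey' : ∀ᵐ ω ∂P, ∀ q : ℚ, 0 < (q:ℝ) →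
      (1 + r) * (q:ℝ) ^ (-r) - r * (q:ℝ) ^ (-r - 1) * g ω ≤ h2 ω := by
    rw [ae_all_iff]
    intro q
    by_cases hq : 0 < (q:ℝ)
    · filter_upwards [hkey q hq] with ω hω _; exact hω
    · exact Filter.Eventually.of_forall fun ω hq' => absurd hq' hq
  -- main a.e. inequality (conditional Jensen)
  have hmain : ∀ᵐ ω ∂P, g ω ^ (-r) ≤ h2 ω := by
    filter_upwards [hkey', hg0, hh20] with ω hq hgω hh2ω
    simp only [Pi.zero_apply] at hgω hh2ω
    rcases eq_or_lt_of_le hgω with hgeq | hgpos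
    · rw [← hgeq, Real.zero_rpow (neg_ne_zero.2 (by linarith))]
      exact hh2ω
    · set x : ℝ := g ω
      have hseq : ∀ n : ℕ, ∃ q : ℚ, x < (q:ℝ) ∧ (q:ℝ) < x + 1 / (n + 1) := by
        intro n
        exact exists_rat_btwn (lt_add_of_pos_right x (by positivity))
      choose q hq1 hq2 using hseq
      have hqpos : ∀ n, (0:ℝ) < (q n : ℝ) := fun n => lt_trans hgpos (hq1 n)
      have hbnd : ∀ n, (1 + r) * (q n:ℝ) ^ (-r) - r * (q n:ℝ) ^ (-r - 1) * x ≤ h2 ω :=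
        fun n => hq (q n) (hqpos n)
      have htend : Tendsto (fun n => ((q n : ℝ))) atTop (nhds x) := by
        have hup : Tendsto (fun n : ℕ => x + 1 / (n + 1 : ℝ)) atTop (nhds x) := by
          have := tendsto_one_div_add_atTop_nhds_zero_nat (𝕜 := ℝ)
          have := tendsto_const_nhds (x := x) (f := atTop (α := ℕ)) |>.add this
          simpa using this
        exact tendsto_of_tendsto_of_tendsto_of_le_of_le tendsto_const_nhds hup
          (fun n => (hq1 n).le) (fun n => (hq2 n).le)
      have t1 : Tendsto (fun n => ((q n : ℝ)) ^ (-r)) atTop (nhds (x ^ (-r))) :=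
        ((Real.continuousAt_rpow_const x (-r) (Or.inl hgpos.ne')).tendsto).comp htend
      have t2 : Tendsto (fun n => ((q n : ℝ)) ^ (-r - 1)) atTop (nhds (x ^ (-r - 1))) :=
        ((Real.continuousAt_rpow_const x (-r - 1) (Or.inl hgpos.ne')).tendsto).comp htend
      have hcomb : Tendsto (fun n => (1 + r) * (q n:ℝ) ^ (-r) - r * (q n:ℝ) ^ (-r - 1) * x)
          atTop (nhds ((1 + r) * x ^ (-r) - r * x ^ (-r - 1) * x)) :=
        ((tendsto_const_nhds.mul t1).sub ((tendsto_const_nhds.mul t2).mul tendsto_const_nhds))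
      have hlim : (1 + r) * x ^ (-r) - r * x ^ (-r - 1) * x = x ^ (-r) := by
        have hxne : x ≠ 0 := ne_of_gt hgpos
        rw [Real.rpow_sub hgpos, Real.rpow_one]
        field_simp
        ring
      rw [← hlim]
      exact le_of_tendsto hcomb (Filter.Eventually.of_forall hbnd)
  -- conclude
  have hgmeas : Measurable[mΩ] g := (stronglyMeasurable_condExp.mono h𝒢).measurable
  have hgr_meas : Measurable[mΩ] fun ω => g ω ^ (-r) := by
    refine Measurable.pow hgmeas ?_
    exact @measurable_const ℝ Ω _ mΩ _
  have hh2int : Integrable h2 P := by rw [hh2]; exact integrable_condExp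
  have hgr_int : Integrable (fun ω => g ω ^ (-r)) P := by
    refine hh2int.mono' hgr_meas.aestronglyMeasurable ?_
    filter_upwards [hmain, hg0] with ω hω hgω
    simp only [Pi.zero_apply] at hgω
    rw [Real.norm_eq_abs, abs_of_nonneg (Real.rpow_nonneg hgω _)]
    exact hω
  have hfin : ∫ ω, h2 ω ∂P = ∫ ω, Z ω ^ (-r) ∂P := by
    rw [hh2]; exact integral_condExp (f := fun ω => Z ω ^ (-r)) h𝒢
  calc ∫ ω, g ω ^ (-r) ∂P ≤ ∫ ω, h2 ω ∂P := integral_mono_ae hgr_int hh2int hmain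
    _ = ∫ ω, Z ω ^ (-r) ∂P := hfin
    _ ≤ C := hZr_intle
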